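/- (Proposition: consistency of the smallest singular value of the first-order coefficient matrix under plug-in estimates.) Fix m ≥ 1, c_0 > 0 and θ ∈ Θ_{c_0}. Let (θ̂_n)_{n≥1} be a sequence of random parameters (each θ̂_n = (θ̂_{n,1},…,θ̂_{n,K}) with probability-vector components, defined on some probability space) such that d_W(θ, θ̂_n) → 0 in probability. Then σ_min(A(θ̂_n)) → σ_min(A(θ)) in probability, where σ_min denotes the smallest singular value. -/

import Mathlib

open MeasureTheory Filter

noncomputable section

namespace TopicModel

/-- The probability simplex in `ℝ^K`. -/
def simplex (K : ℕ) : Set (Fin K → ℝ) := {h | (∀ k, 0 ≤ h k) ∧ ∑ k, h k = 1}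

/-- The parameter set `Θ_{c₀}`: `K` topic vectors, each a probability vector on `[V]`
with all entries at least `c₀`. -/
def Theta (c0 : ℝ) (V K : ℕ) : Set (Fin K → Fin V → ℝ) :=
  {θ | (∀ k ℓ, c0 ≤ θ k ℓ) ∧ ∀ k, ∑ ℓ, θ k ℓ = 1}

/-- `θ` is a tuple of probability vectors. -/
def IsParam {V K : ℕ} (θ : Fin K → Fin V → ℝ) : Prop :=
  (∀ k ℓ, 0 ≤ θ k ℓ) ∧ ∀ k, ∑ ℓ, θ k ℓ = 1

/-- Word probability `p_{θ,h}(v) = Σ_k h_k θ_k(v)`. -/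
def pWord {V K : ℕ} (θ : Fin K → Fin V → ℝ) (h : Fin K → ℝ) (v : Fin V) : ℝ :=
  ∑ k, h k * θ k v

/-- Document probability given mixing vector `h`: `p_{θ,h}(x) = Π_i p_{θ,h}(x_i)`. -/
def pDoc {V K : ℕ} (m : ℕ) (θ : Fin K → Fin V → ℝ) (h : Fin K → ℝ)
    (x : Fin m → Fin V) : ℝ :=
  ∏ i, pWord θ h (x i)

/-- Marginal document probability `p_{θ,m}(x) = ∫ p_{θ,h}(x) dν₀(h)`. -/
def pM {V K : ℕ} (ν0 : Measure (Fin K → ℝ)) (m : ℕ) (θ : Fin K → Fin V → ℝ)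
    (x : Fin m → Fin V) : ℝ :=
  ∫ h, pDoc m θ h x ∂ν0

/-- `ℓ¹`-norm of a `K × V` array: `‖δ‖₁ = Σ_k Σ_ℓ |δ_k(ℓ)|`. -/
def norm1 {V K : ℕ} (δ : Fin K → Fin V → ℝ) : ℝ := ∑ k, ∑ ℓ, |δ k ℓ|

/-- Wasserstein distance between parameters:
`d_W(θ,θ') = min_π Σ_k ‖θ_k − θ'_{π(k)}‖₁`. -/
def dW {V K : ℕ} (θ θ' : Fin K → Fin V → ℝ) : ℝ :=
  ⨅ π : Equiv.Perm (Fin K), ∑ k, ∑ ℓ, |θ k ℓ - θ' (π k) ℓ|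

/-- `L¹` distance between the document pmfs of two parameters. -/
def distL1 {V K : ℕ} (ν0 : Measure (Fin K → ℝ)) (m : ℕ)
    (θ θ' : Fin K → Fin V → ℝ) : ℝ :=
  ∑ x : Fin m → Fin V, |pM ν0 m θ x - pM ν0 m θ' x|

/-- The `p`-th order degeneracy criterion `𝔡_{m,p}(θ)`: the infimum over all
`δ` with `‖δ‖₁ = 1` and `Σ_ℓ δ_k(ℓ) = 0` for every `k`, of
`Σ_{x ∈ [V]^m} |∫ p_{θ,h}(x) Σ_{i₁<⋯<i_p} Π_t (δ_h(x_{i_t}) / p_{θ,h}(x_{i_t})) dν₀|`. -/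
def degen {V K : ℕ} (ν0 : Measure (Fin K → ℝ)) (m : ℕ) (θ : Fin K → Fin V → ℝ)
    (p : ℕ) : ℝ :=
  sInf {r : ℝ | ∃ δ : Fin K → Fin V → ℝ, norm1 δ = 1 ∧ (∀ k, ∑ ℓ, δ k ℓ = 0) ∧
    r = ∑ x : Fin m → Fin V,
      |∫ h, pDoc m θ h x *
        ∑ S ∈ Finset.powersetCard p (Finset.univ : Finset (Fin m)),
          ∏ i ∈ S, ((∑ k, h k * δ k (x i)) / pWord θ h (x i)) ∂ν0|}

/-- The order of degeneracy `𝔭(m;θ) ∈ ℕ ∪ {∞}`: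
the least `p ∈ {1,…,m}` with `𝔡_{m,p}(θ) > 0`, or `∞` if none exists. -/
def pOrder {V K : ℕ} (ν0 : Measure (Fin K → ℝ)) (m : ℕ) (θ : Fin K → Fin V → ℝ) : ℕ∞ :=
  sInf ((↑) '' {p : ℕ | 1 ≤ p ∧ p ≤ m ∧ 0 < degen ν0 m θ p})

/-- Assumption (A2) on the mixing measure `ν₀`: a Borel probability measure supported on the
simplex, exchangeable, with `E[h₁²] > E[h₁h₂]` and (when `K ≥ 3`)
`E[h₁³] + 2E[h₁h₂h₃] > 3E[h₁²h₂]`. -/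
structure NiceMixing (K : ℕ) (ν0 : Measure (Fin K → ℝ)) : Prop where
  prob : IsProbabilityMeasure ν0
  support : ν0 (simplex K)ᶜ = 0
  exch : ∀ π : Equiv.Perm (Fin K), Measure.map (fun h => h ∘ π) ν0 = ν0
  mom2 : ∀ i j : Fin K, i ≠ j → ∫ h, h i * h j ∂ν0 < ∫ h, h i ^ 2 ∂ν0
  mom3 : ∀ i j k : Fin K, i ≠ j → j ≠ k → i ≠ k →
    3 * ∫ h, h i ^ 2 * h j ∂ν0 < ∫ h, h i ^ 3 ∂ν0 + 2 * ∫ h, h i * h j * h k ∂ν0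

/-- The equivalence class `Θ̃_{c₀}(θ)` of parameters inducing the same document pmf as `θ`. -/
def equivClass {V K : ℕ} (ν0 : Measure (Fin K → ℝ)) (m : ℕ) (c0 : ℝ)
    (θ : Fin K → Fin V → ℝ) : Set (Fin K → Fin V → ℝ) :=
  {θ' | θ' ∈ Theta c0 V K ∧ ∀ x : Fin m → Fin V, pM ν0 m θ' x = pM ν0 m θ x}

/-- Probability of the event `A` under `n` i.i.d. draws from the pmf `p` on a finite set. -/
def prodProb {α : Type*} [Fintype α] (p : α → ℝ) (n : ℕ) (A : Set (Fin n → α)) : ℝ :=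
  ∑ xs : Fin n → α, A.indicator (fun ys => ∏ i, p (ys i)) xs

end TopicModel

namespace TopicModel

/-- The coefficient `ξ(i,j;θ,x) = ∫ h_j Π_{i'≠i} p_{θ,h}(x_{i'}) dν₀(h)`. -/
def xi1 {V K m : ℕ} (ν0 : Measure (Fin K → ℝ)) (θ : Fin K → Fin V → ℝ)
    (i : Fin m) (j : Fin K) (x : Fin m → Fin V) : ℝ :=
  ∫ h, h j * ∏ i' ∈ ({i} : Finset (Fin m))ᶜ, pWord θ h (x i') ∂ν0

/-- The `(V^m + K) × (VK)` coefficient matrix `A(θ)` of the first-order linear system: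
rows indexed by documents `x ∈ [V]^m` (entry in column `(j,k)` equal to
`Σ_{i : x_i = k} ξ(i,j;θ,x)`) and by `j' ∈ [K]` (encoding `Σ_k δ_{j'k} = 0`). -/
def coefMatrix {V K : ℕ} (ν0 : Measure (Fin K → ℝ)) (m : ℕ) (θ : Fin K → Fin V → ℝ) :
    Matrix ((Fin m → Fin V) ⊕ Fin K) (Fin K × Fin V) ℝ :=
  fun r c =>
    match r with
    | Sum.inl x => ∑ i ∈ Finset.univ.filter (fun i => x i = c.2), xi1 ν0 θ i c.1 x
    | Sum.inr j => if j = c.1 then 1 else 0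

/-- The smallest singular value of a real matrix: the infimum of `‖Av‖₂` over unit vectors. -/
def sigmaMin {R C : Type*} [Fintype R] [Fintype C] (A : Matrix R C ℝ) : ℝ :=
  sInf {s : ℝ | ∃ v : C → ℝ, ∑ c, v c ^ 2 = 1 ∧ s = Real.sqrt (∑ r, A.mulVec v r ^ 2)}


/-! ### Auxiliary lemmas -/

section Aux

lemma aux_abs_prod_sub_prod_le {ι : Type*} (s : Finset ι) (a b : ι → ℝ) :
    (∀ i ∈ s, a i ∈ Set.Icc (0:ℝ) 1) → (∀ i ∈ s, b i ∈ Set.Icc (0:ℝ) 1) →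
    |∏ i ∈ s, a i - ∏ i ∈ s, b i| ≤ ∑ i ∈ s, |a i - b i| := by
  classical
  induction s using Finset.induction_on with
  | empty => simp
  | @insert x s hxs ih =>
    intro ha hb
    have hax := ha x (Finset.mem_insert_self x s)
    have hbx := hb x (Finset.mem_insert_self x s)
    have ha' : ∀ i ∈ s, a i ∈ Set.Icc (0:ℝ) 1 := fun i hi => ha i (Finset.mem_insert_of_mem hi)
    have hb' : ∀ i ∈ s, b i ∈ Set.Icc (0:ℝ) 1 := fun i hi => hb i (Finset.mem_insert_of_mem hi)
    rw [Finset.prod_insert hxs, Finset.prod_insert hxs, Finset.sum_insert hxs]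
    have hPa : (0:ℝ) ≤ ∏ i ∈ s, a i := Finset.prod_nonneg fun i hi => (ha' i hi).1
    have hPa1 : ∏ i ∈ s, a i ≤ 1 :=
      Finset.prod_le_one (fun i hi => (ha' i hi).1) (fun i hi => (ha' i hi).2)
    have key : a x * ∏ i ∈ s, a i - b x * ∏ i ∈ s, b i
        = (a x - b x) * ∏ i ∈ s, a i + b x * (∏ i ∈ s, a i - ∏ i ∈ s, b i) := by ring
    rw [key]
    calc |(a x - b x) * ∏ i ∈ s, a i + b x * (∏ i ∈ s, a i - ∏ i ∈ s, b i)|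
        ≤ |(a x - b x) * ∏ i ∈ s, a i| + |b x * (∏ i ∈ s, a i - ∏ i ∈ s, b i)| := abs_add_le _ _
      _ = |a x - b x| * |∏ i ∈ s, a i| + |b x| * |∏ i ∈ s, a i - ∏ i ∈ s, b i| := by
          rw [abs_mul, abs_mul]
      _ ≤ |a x - b x| * 1 + 1 * ∑ i ∈ s, |a i - b i| := by
          have h1 : |∏ i ∈ s, a i| ≤ 1 := by rw [abs_of_nonneg hPa]; exact hPa1
          have h2 : |b x| ≤ 1 := by rw [abs_of_nonneg hbx.1]; exact hbx.2
          have h3 := ih ha' hb'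
          have h4 : (0:ℝ) ≤ |a x - b x| := abs_nonneg _
          have h5 : (0:ℝ) ≤ |∏ i ∈ s, a i - ∏ i ∈ s, b i| := abs_nonneg _
          nlinarith
      _ = |a x - b x| + ∑ i ∈ s, |a i - b i| := by ring

lemma simplex_nonneg {K : ℕ} {h : Fin K → ℝ} (hh : h ∈ simplex K) (k : Fin K) : 0 ≤ h k :=
  hh.1 k

lemma simplex_le_one {K : ℕ} {h : Fin K → ℝ} (hh : h ∈ simplex K) (k : Fin K) : h k ≤ 1 := by
  have := Finset.single_le_sum (f := fun k => h k) (fun i _ => hh.1 i) (Finset.mem_univ k)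
  simpa [hh.2] using this

lemma param_le_one {V K : ℕ} {θ : Fin K → Fin V → ℝ} (hθ : IsParam θ) (k : Fin K) (ℓ : Fin V) :
    θ k ℓ ≤ 1 := by
  have := Finset.single_le_sum (f := fun ℓ => θ k ℓ) (fun i _ => hθ.1 k i) (Finset.mem_univ ℓ)
  simpa [hθ.2 k] using this

lemma pWord_mem_Icc {V K : ℕ} {θ : Fin K → Fin V → ℝ} (hθ : IsParam θ) {h : Fin K → ℝ}
    (hh : h ∈ simplex K) (v : Fin V) : pWord θ h v ∈ Set.Icc (0:ℝ) 1 := by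
  constructor
  · exact Finset.sum_nonneg fun k _ => mul_nonneg (hh.1 k) (hθ.1 k v)
  · calc ∑ k, h k * θ k v ≤ ∑ k, h k * 1 :=
        Finset.sum_le_sum fun k _ =>
          mul_le_mul_of_nonneg_left (param_le_one hθ k v) (hh.1 k)
      _ = 1 := by simpa using hh.2

lemma pWord_lip {V K : ℕ} {θ1 θ2 : Fin K → Fin V → ℝ}
    {h : Fin K → ℝ} (hh : h ∈ simplex K) (v : Fin V) :
    |pWord θ1 h v - pWord θ2 h v| ≤ ∑ k, ∑ ℓ, |θ1 k ℓ - θ2 k ℓ| := by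
  unfold pWord
  rw [← Finset.sum_sub_distrib]
  calc |∑ k, (h k * θ1 k v - h k * θ2 k v)|
      ≤ ∑ k, |h k * θ1 k v - h k * θ2 k v| := Finset.abs_sum_le_sum_abs _ _
    _ = ∑ k, h k * |θ1 k v - θ2 k v| := by
        refine Finset.sum_congr rfl fun k _ => ?_
        rw [← mul_sub, abs_mul, abs_of_nonneg (hh.1 k)]
    _ ≤ ∑ k, 1 * |θ1 k v - θ2 k v| := by
        refine Finset.sum_le_sum fun k _ => ?_
        exact mul_le_mul_of_nonneg_right (simplex_le_one hh k) (abs_nonneg _)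
    _ = ∑ k, |θ1 k v - θ2 k v| := by simp
    _ ≤ ∑ k, ∑ ℓ, |θ1 k ℓ - θ2 k ℓ| :=
        Finset.sum_le_sum fun k _ =>
          Finset.single_le_sum (f := fun ℓ => |θ1 k ℓ - θ2 k ℓ|)
            (fun ℓ _ => abs_nonneg _) (Finset.mem_univ v)

variable {V K m : ℕ} {ν0 : Measure (Fin K → ℝ)}

lemma contf (θ : Fin K → Fin V → ℝ) (i : Fin m) (j : Fin K) (x : Fin m → Fin V) :
    Continuous fun h : Fin K → ℝ =>
      h j * ∏ i' ∈ ({i} : Finset (Fin m))ᶜ, pWord θ h (x i') := by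
  unfold pWord
  exact (continuous_apply j).mul (continuous_finset_prod _ fun i' _ =>
    continuous_finset_sum _ fun k _ => (continuous_apply k).mul continuous_const)

lemma ae_simplex (hsupp : ν0 (simplex K)ᶜ = 0) : ∀ᵐ h ∂ν0, h ∈ simplex K := by
  rw [MeasureTheory.ae_iff]
  simpa [Set.compl_def] using hsupp

lemma xi1_integrable [IsProbabilityMeasure ν0] (hsupp : ν0 (simplex K)ᶜ = 0)
    {θ : Fin K → Fin V → ℝ} (hθ : IsParam θ) (i : Fin m) (j : Fin K) (x : Fin m → Fin V) :
    MeasureTheory.Integrable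
      (fun h : Fin K → ℝ => h j * ∏ i' ∈ ({i} : Finset (Fin m))ᶜ, pWord θ h (x i')) ν0 := by
  refine (MeasureTheory.integrable_const (1:ℝ)).mono'
    (contf θ i j x).aestronglyMeasurable ?_
  filter_upwards [ae_simplex hsupp] with h hh
  rw [Real.norm_eq_abs, abs_mul]
  have h1 : |h j| ≤ 1 := by rw [abs_of_nonneg (hh.1 j)]; exact simplex_le_one hh j
  have h2 : |∏ i' ∈ ({i} : Finset (Fin m))ᶜ, pWord θ h (x i')| ≤ 1 := by
    rw [abs_of_nonneg (Finset.prod_nonneg fun i' _ => (pWord_mem_Icc hθ hh (x i')).1)]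
    exact Finset.prod_le_one (fun i' _ => (pWord_mem_Icc hθ hh (x i')).1)
      (fun i' _ => (pWord_mem_Icc hθ hh (x i')).2)
  nlinarith [abs_nonneg (h j), abs_nonneg (∏ i' ∈ ({i} : Finset (Fin m))ᶜ, pWord θ h (x i'))]

lemma xi1_lip [IsProbabilityMeasure ν0] (hsupp : ν0 (simplex K)ᶜ = 0)
    {θ1 θ2 : Fin K → Fin V → ℝ} (h1 : IsParam θ1) (h2 : IsParam θ2)
    (i : Fin m) (j : Fin K) (x : Fin m → Fin V) :
    |xi1 ν0 θ1 i j x - xi1 ν0 θ2 i j x| ≤ m * ∑ k, ∑ ℓ, |θ1 k ℓ - θ2 k ℓ| := by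
  have hD0 : (0:ℝ) ≤ ∑ k, ∑ ℓ, |θ1 k ℓ - θ2 k ℓ| :=
    Finset.sum_nonneg fun _ _ => Finset.sum_nonneg fun _ _ => abs_nonneg _
  have hdiff : ∀ᵐ h ∂ν0,
      ‖(h j * ∏ i' ∈ ({i} : Finset (Fin m))ᶜ, pWord θ1 h (x i'))
        - h j * ∏ i' ∈ ({i} : Finset (Fin m))ᶜ, pWord θ2 h (x i')‖
        ≤ m * ∑ k, ∑ ℓ, |θ1 k ℓ - θ2 k ℓ| := by
    filter_upwards [ae_simplex hsupp] with h hh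
    rw [Real.norm_eq_abs, ← mul_sub, abs_mul]
    have hja : |h j| ≤ 1 := by rw [abs_of_nonneg (hh.1 j)]; exact simplex_le_one hh j
    have hprod : |∏ i' ∈ ({i} : Finset (Fin m))ᶜ, pWord θ1 h (x i')
        - ∏ i' ∈ ({i} : Finset (Fin m))ᶜ, pWord θ2 h (x i')|
        ≤ ∑ i' ∈ ({i} : Finset (Fin m))ᶜ, |pWord θ1 h (x i') - pWord θ2 h (x i')| :=
      aux_abs_prod_sub_prod_le _ _ _ (fun i' _ => pWord_mem_Icc h1 hh (x i'))
        (fun i' _ => pWord_mem_Icc h2 hh (x i'))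
    have hsum : ∑ i' ∈ ({i} : Finset (Fin m))ᶜ, |pWord θ1 h (x i') - pWord θ2 h (x i')|
        ≤ ∑ _i' ∈ ({i} : Finset (Fin m))ᶜ, ∑ k, ∑ ℓ, |θ1 k ℓ - θ2 k ℓ| :=
      Finset.sum_le_sum fun i' _ => pWord_lip hh (x i')
    have hcard : (∑ _i' ∈ ({i} : Finset (Fin m))ᶜ, ∑ k, ∑ ℓ, |θ1 k ℓ - θ2 k ℓ|)
        ≤ m * ∑ k, ∑ ℓ, |θ1 k ℓ - θ2 k ℓ| := by
      rw [Finset.sum_const, nsmul_eq_mul]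
      refine mul_le_mul_of_nonneg_right ?_ hD0
      have := Finset.card_le_univ (({i} : Finset (Fin m))ᶜ)
      have h' : (({i} : Finset (Fin m))ᶜ).card ≤ m := by simpa using this
      exact_mod_cast h'
    have habs : (0:ℝ) ≤ |∏ i' ∈ ({i} : Finset (Fin m))ᶜ, pWord θ1 h (x i')
        - ∏ i' ∈ ({i} : Finset (Fin m))ᶜ, pWord θ2 h (x i')| := abs_nonneg _
    nlinarith [abs_nonneg (h j)]
  calc |xi1 ν0 θ1 i j x - xi1 ν0 θ2 i j x|
      = ‖∫ h, ((h j * ∏ i' ∈ ({i} : Finset (Fin m))ᶜ, pWord θ1 h (x i'))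
          - h j * ∏ i' ∈ ({i} : Finset (Fin m))ᶜ, pWord θ2 h (x i')) ∂ν0‖ := by
        rw [MeasureTheory.integral_sub (xi1_integrable hsupp h1 i j x)
          (xi1_integrable hsupp h2 i j x), Real.norm_eq_abs]
        rfl
    _ ≤ (m * ∑ k, ∑ ℓ, |θ1 k ℓ - θ2 k ℓ|) * (ν0 Set.univ).toReal :=
        MeasureTheory.norm_integral_le_of_norm_le_const hdiff
    _ = m * ∑ k, ∑ ℓ, |θ1 k ℓ - θ2 k ℓ| := by simp

lemma coef_entry_lip [IsProbabilityMeasure ν0] (hsupp : ν0 (simplex K)ᶜ = 0)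
    {θ1 θ2 : Fin K → Fin V → ℝ} (h1 : IsParam θ1) (h2 : IsParam θ2)
    (r : (Fin m → Fin V) ⊕ Fin K) (c : Fin K × Fin V) :
    |coefMatrix ν0 m θ1 r c - coefMatrix ν0 m θ2 r c|
      ≤ (m * m) * ∑ k, ∑ ℓ, |θ1 k ℓ - θ2 k ℓ| := by
  have hD0 : (0:ℝ) ≤ ∑ k, ∑ ℓ, |θ1 k ℓ - θ2 k ℓ| :=
    Finset.sum_nonneg fun _ _ => Finset.sum_nonneg fun _ _ => abs_nonneg _
  rcases r with x | j
  · show |(∑ i ∈ Finset.univ.filter (fun i => x i = c.2), xi1 ν0 θ1 i c.1 x)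
      - ∑ i ∈ Finset.univ.filter (fun i => x i = c.2), xi1 ν0 θ2 i c.1 x| ≤ _
    rw [← Finset.sum_sub_distrib]
    calc |∑ i ∈ Finset.univ.filter (fun i => x i = c.2),
          (xi1 ν0 θ1 i c.1 x - xi1 ν0 θ2 i c.1 x)|
        ≤ ∑ i ∈ Finset.univ.filter (fun i => x i = c.2),
            |xi1 ν0 θ1 i c.1 x - xi1 ν0 θ2 i c.1 x| := Finset.abs_sum_le_sum_abs _ _
      _ ≤ ∑ _i ∈ Finset.univ.filter (fun i => x i = c.2),
            (m * ∑ k, ∑ ℓ, |θ1 k ℓ - θ2 k ℓ|) :=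
          Finset.sum_le_sum fun i _ => xi1_lip hsupp h1 h2 i c.1 x
      _ ≤ (m * m) * ∑ k, ∑ ℓ, |θ1 k ℓ - θ2 k ℓ| := by
          rw [Finset.sum_const, nsmul_eq_mul]
          have hcard : ((Finset.univ.filter (fun i => x i = c.2)).card : ℝ) ≤ m := by
            have := Finset.card_le_univ (Finset.univ.filter (fun i => x i = c.2))
            have h' : (Finset.univ.filter (fun i => x i = c.2)).card ≤ m := by simpa using this
            exact_mod_cast h'
          have hm0 : (0:ℝ) ≤ (m:ℝ) := by positivity
          have hkey := mul_le_mul_of_nonneg_right hcard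
            (mul_nonneg hm0 hD0)
          nlinarith [hkey]
  · show |(if j = c.1 then (1:ℝ) else 0) - (if j = c.1 then (1:ℝ) else 0)| ≤ _
    simp only [sub_self, abs_zero]
    positivity

lemma sqrt_sum_sq_eq_norm {R : Type*} [Fintype R] (f : R → ℝ) :
    Real.sqrt (∑ r, f r ^ 2) = ‖(WithLp.equiv 2 (R → ℝ)).symm f‖ := by
  rw [EuclideanSpace.norm_eq]
  congr 1
  refine Finset.sum_congr rfl fun r _ => ?_
  rw [WithLp.equiv_symm_apply, WithLp.ofLp_toLp, Real.norm_eq_abs, sq_abs]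

lemma mulVec_sqrt_bound {R C : Type*} [Fintype R] [Fintype C]
    (A B : Matrix R C ℝ) {e : ℝ} (he : 0 ≤ e) (hent : ∀ r c, |A r c - B r c| ≤ e)
    (v : C → ℝ) (hv : ∑ c, v c ^ 2 = 1) :
    Real.sqrt (∑ r, A.mulVec v r ^ 2)
      ≤ Real.sqrt (∑ r, B.mulVec v r ^ 2)
        + (Fintype.card R) * (((Fintype.card C : ℝ) + 1)/2) * e := by
  have hsumv : ∑ c, |v c| ≤ ((Fintype.card C : ℝ) + 1) / 2 := by
    calc ∑ c, |v c| ≤ ∑ c, (v c ^ 2 + 1)/2 :=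
        Finset.sum_le_sum fun c _ => by nlinarith [sq_nonneg (|v c| - 1), sq_abs (v c)]
      _ = ((∑ c, v c ^ 2) + (Fintype.card C : ℝ)) / 2 := by
          rw [← Finset.sum_div, Finset.sum_add_distrib]
          simp [Finset.card_univ]
      _ = ((Fintype.card C : ℝ) + 1)/2 := by rw [hv]; ring
  set bd := (((Fintype.card C : ℝ) + 1)/2) * e with hbd
  have hbd0 : 0 ≤ bd := by positivity
  have hrow : ∀ r, |A.mulVec v r - B.mulVec v r| ≤ bd := by
    intro r
    have heq : A.mulVec v r - B.mulVec v r = ∑ c, (A r c - B r c) * v c := by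
      simp [Matrix.mulVec, dotProduct, ← Finset.sum_sub_distrib, sub_mul]
    rw [heq]
    calc |∑ c, (A r c - B r c) * v c| ≤ ∑ c, |(A r c - B r c) * v c| :=
        Finset.abs_sum_le_sum_abs _ _
      _ = ∑ c, |A r c - B r c| * |v c| := by simp [abs_mul]
      _ ≤ ∑ c, e * |v c| :=
          Finset.sum_le_sum fun c _ => mul_le_mul_of_nonneg_right (hent r c) (abs_nonneg _)
      _ = e * ∑ c, |v c| := by rw [← Finset.mul_sum]
      _ ≤ e * (((Fintype.card C : ℝ) + 1)/2) := mul_le_mul_of_nonneg_left hsumv he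
      _ = bd := by rw [hbd]; ring
  have tri : Real.sqrt (∑ r, A.mulVec v r ^ 2)
      ≤ Real.sqrt (∑ r, B.mulVec v r ^ 2)
        + Real.sqrt (∑ r, (A.mulVec v r - B.mulVec v r) ^ 2) := by
    rw [sqrt_sum_sq_eq_norm, sqrt_sum_sq_eq_norm,
      sqrt_sum_sq_eq_norm (fun r => A.mulVec v r - B.mulVec v r)]
    have heq : (WithLp.equiv 2 (R → ℝ)).symm (A.mulVec v)
        = (WithLp.equiv 2 (R → ℝ)).symm (B.mulVec v)
          + (WithLp.equiv 2 (R → ℝ)).symm (fun r => A.mulVec v r - B.mulVec v r) := by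
      ext r
      simp [WithLp.equiv_symm_apply]
    rw [heq]
    exact norm_add_le _ _
  have hlast : Real.sqrt (∑ r, (A.mulVec v r - B.mulVec v r) ^ 2)
      ≤ (Fintype.card R : ℝ) * bd := by
    have h1 : ∑ r, (A.mulVec v r - B.mulVec v r) ^ 2 ≤ (Fintype.card R : ℝ) * bd ^ 2 := by
      calc ∑ r, (A.mulVec v r - B.mulVec v r) ^ 2 ≤ ∑ _r : R, bd ^ 2 :=
          Finset.sum_le_sum fun r _ => by
            have := hrow r
            nlinarith [sq_abs (A.mulVec v r - B.mulVec v r), abs_nonneg (A.mulVec v r - B.mulVec v r)]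
        _ = (Fintype.card R : ℝ) * bd ^ 2 := by
            rw [Finset.sum_const, nsmul_eq_mul, Finset.card_univ]
    have hsR : Real.sqrt (Fintype.card R : ℝ) ≤ (Fintype.card R : ℝ) := by
      rcases Nat.eq_zero_or_pos (Fintype.card R) with h | h
      · simp [h]
      · have h1' : (1:ℝ) ≤ (Fintype.card R : ℝ) := by exact_mod_cast h
        calc Real.sqrt (Fintype.card R : ℝ)
            ≤ Real.sqrt ((Fintype.card R : ℝ) ^ 2) := Real.sqrt_le_sqrt (by nlinarith)
          _ = (Fintype.card R : ℝ) := Real.sqrt_sq (by positivity)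
    calc Real.sqrt (∑ r, (A.mulVec v r - B.mulVec v r) ^ 2)
        ≤ Real.sqrt ((Fintype.card R : ℝ) * bd ^ 2) := Real.sqrt_le_sqrt h1
      _ = Real.sqrt (Fintype.card R : ℝ) * bd := by
          rw [Real.sqrt_mul (by positivity), Real.sqrt_sq hbd0]
      _ ≤ (Fintype.card R : ℝ) * bd := mul_le_mul_of_nonneg_right hsR hbd0
  have hfin : (Fintype.card R : ℝ) * bd
      = (Fintype.card R : ℝ) * (((Fintype.card C : ℝ) + 1)/2) * e := by rw [hbd]; ring
  linarith

lemma sigmaMin_sub_le {R C : Type*} [Fintype R] [Fintype C] [Nonempty C]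
    (A B : Matrix R C ℝ) {e : ℝ} (he : 0 ≤ e) (hent : ∀ r c, |A r c - B r c| ≤ e) :
    |sigmaMin A - sigmaMin B|
      ≤ (Fintype.card R : ℝ) * (((Fintype.card C : ℝ) + 1)/2) * e := by
  set L := (Fintype.card R : ℝ) * (((Fintype.card C : ℝ) + 1)/2) * e with hL
  classical
  have hv0 : ∑ c : C, (if c = Classical.arbitrary C then (1:ℝ) else 0) ^ 2 = 1 := by
    have hsq : ∀ c : C, (if c = Classical.arbitrary C then (1:ℝ) else 0) ^ 2
        = if c = Classical.arbitrary C then (1:ℝ) else 0 := fun c => by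
      by_cases h : c = Classical.arbitrary C <;> simp [h]
    simp only [hsq, Finset.sum_ite_eq', Finset.mem_univ, if_true]
  have hne : ∀ M : Matrix R C ℝ,
      ({s : ℝ | ∃ v : C → ℝ, ∑ c, v c ^ 2 = 1 ∧
        s = Real.sqrt (∑ r, M.mulVec v r ^ 2)}).Nonempty :=
    fun M => ⟨_, _, hv0, rfl⟩
  have hbdd : ∀ M : Matrix R C ℝ,
      BddBelow {s : ℝ | ∃ v : C → ℝ, ∑ c, v c ^ 2 = 1 ∧
        s = Real.sqrt (∑ r, M.mulVec v r ^ 2)} := by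
    intro M
    refine ⟨0, fun s hs => ?_⟩
    obtain ⟨v, hv, rfl⟩ := hs
    exact Real.sqrt_nonneg _
  have main : ∀ M N : Matrix R C ℝ, (∀ r c, |M r c - N r c| ≤ e) →
      sigmaMin M ≤ sigmaMin N + L := by
    intro M N h
    rw [← sub_le_iff_le_add]
    refine le_csInf (hne N) ?_
    rintro s ⟨v, hv, rfl⟩
    have hM : sigmaMin M ≤ Real.sqrt (∑ r, M.mulVec v r ^ 2) :=
      csInf_le (hbdd M) ⟨v, hv, rfl⟩
    have h2 := mulVec_sqrt_bound M N he h v hv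
    rw [← hL] at h2
    linarith
  have hBA : ∀ r c, |B r c - A r c| ≤ e := fun r c => by
    rw [abs_sub_comm]; exact hent r c
  have hab := main A B hent
  have hba := main B A hBA
  rw [abs_sub_le_iff]
  constructor <;> linarith

lemma sigmaMin_reindex {R C : Type*} [Fintype R] [Fintype C]
    (A : Matrix R C ℝ) (ρ : Equiv.Perm R) (σ : Equiv.Perm C) :
    sigmaMin (fun r c => A (ρ r) (σ c)) = sigmaMin A := by
  have key : ∀ (w : C → ℝ) (r : R),
      Matrix.mulVec (fun r c => A (ρ r) (σ c)) (fun c => w (σ c)) r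
        = A.mulVec w (ρ r) := by
    intro w r
    simp only [Matrix.mulVec, dotProduct]
    exact Equiv.sum_comp σ fun c => A (ρ r) c * w c
  have key2 : ∀ (v : C → ℝ) (r : R),
      Matrix.mulVec (fun r c => A (ρ r) (σ c)) v r
        = A.mulVec (fun c => v (σ.symm c)) (ρ r) := by
    intro v r
    simp only [Matrix.mulVec, dotProduct]
    rw [← Equiv.sum_comp σ (fun c => A (ρ r) c * v (σ.symm c))]
    simp
  unfold sigmaMin
  congr 1
  ext s
  constructor
  · rintro ⟨v, hv, rfl⟩
    refine ⟨fun c => v (σ.symm c), ?_, ?_⟩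
    · rw [← hv]; exact Equiv.sum_comp σ.symm fun c => v c ^ 2
    · congr 1
      calc ∑ r, Matrix.mulVec (fun r c => A (ρ r) (σ c)) v r ^ 2
          = ∑ r, A.mulVec (fun c => v (σ.symm c)) (ρ r) ^ 2 := by
            refine Finset.sum_congr rfl fun r _ => ?_
            rw [key2 v r]
        _ = ∑ r, A.mulVec (fun c => v (σ.symm c)) r ^ 2 :=
            Equiv.sum_comp ρ fun r => A.mulVec (fun c => v (σ.symm c)) r ^ 2
  · rintro ⟨w, hw, rfl⟩
    refine ⟨fun c => w (σ c), ?_, ?_⟩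
    · rw [← hw]; exact Equiv.sum_comp σ fun c => w c ^ 2
    · congr 1
      calc ∑ r, A.mulVec w r ^ 2
          = ∑ r, A.mulVec w (ρ r) ^ 2 :=
            (Equiv.sum_comp ρ fun r => A.mulVec w r ^ 2).symm
        _ = ∑ r, Matrix.mulVec (fun r c => A (ρ r) (σ c)) (fun c => w (σ c)) r ^ 2 := by
            refine Finset.sum_congr rfl fun r _ => ?_
            rw [key w r]

lemma xi1_perm (hexch : ∀ π : Equiv.Perm (Fin K), Measure.map (fun h => h ∘ π) ν0 = ν0)
    (θ : Fin K → Fin V → ℝ) (π : Equiv.Perm (Fin K)) (i : Fin m) (j : Fin K)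
    (x : Fin m → Fin V) :
    xi1 ν0 (fun k => θ (π k)) i j x = xi1 ν0 θ i (π j) x := by
  unfold xi1
  have hmeas : Measurable fun h : Fin K → ℝ => h ∘ π.symm :=
    measurable_pi_lambda _ fun k => measurable_pi_apply _
  have hcont : Continuous fun g : Fin K → ℝ =>
      g (π j) * ∏ i' ∈ ({i} : Finset (Fin m))ᶜ, pWord θ g (x i') := by
    unfold pWord
    exact (continuous_apply (π j)).mul (continuous_finset_prod _ fun i' _ =>
      continuous_finset_sum _ fun k _ => (continuous_apply k).mul continuous_const)
  calc ∫ h, h j * ∏ i' ∈ ({i} : Finset (Fin m))ᶜ, pWord (fun k => θ (π k)) h (x i') ∂ν0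
      = ∫ h, (fun g : Fin K → ℝ =>
          g (π j) * ∏ i' ∈ ({i} : Finset (Fin m))ᶜ, pWord θ g (x i')) (h ∘ π.symm) ∂ν0 := by
        refine MeasureTheory.integral_congr_ae (Filter.Eventually.of_forall fun h => ?_)
        show h j * ∏ i' ∈ ({i} : Finset (Fin m))ᶜ, pWord (fun k => θ (π k)) h (x i')
            = (h ∘ ⇑π.symm) (π j) * ∏ i' ∈ ({i} : Finset (Fin m))ᶜ, pWord θ (h ∘ ⇑π.symm) (x i')
        congr 1
        · simp
        · refine Finset.prod_congr rfl fun i' _ => ?_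
          unfold pWord
          rw [← Equiv.sum_comp π (fun k => (h ∘ ⇑π.symm) k * θ k (x i'))]
          simp
    _ = ∫ g, (fun g : Fin K → ℝ =>
          g (π j) * ∏ i' ∈ ({i} : Finset (Fin m))ᶜ, pWord θ g (x i')) g
            ∂(Measure.map (fun h => h ∘ π.symm) ν0) :=
        (MeasureTheory.integral_map hmeas.aemeasurable hcont.aestronglyMeasurable).symm
    _ = ∫ g, g (π j) * ∏ i' ∈ ({i} : Finset (Fin m))ᶜ, pWord θ g (x i') ∂ν0 := by
        rw [hexch π.symm]

lemma coefMatrix_perm (hexch : ∀ π : Equiv.Perm (Fin K), Measure.map (fun h => h ∘ π) ν0 = ν0)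
    (θ : Fin K → Fin V → ℝ) (π : Equiv.Perm (Fin K)) :
    coefMatrix ν0 m (fun k => θ (π k))
      = fun r c => coefMatrix ν0 m θ
          (Equiv.sumCongr (Equiv.refl (Fin m → Fin V)) π r)
          (Equiv.prodCongr π (Equiv.refl (Fin V)) c) := by
  funext r c
  rcases r with x | j
  · show (∑ i ∈ Finset.univ.filter (fun i => x i = c.2), xi1 ν0 (fun k => θ (π k)) i c.1 x)
      = ∑ i ∈ Finset.univ.filter (fun i => x i = c.2), xi1 ν0 θ i (π c.1) x
    exact Finset.sum_congr rfl fun i _ => xi1_perm hexch θ π i c.1 x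
  · show (if j = c.1 then (1:ℝ) else 0) = if π j = π c.1 then (1:ℝ) else 0
    simp [Equiv.apply_eq_iff_eq]

lemma sigmaMin_coef_perm (hexch : ∀ π : Equiv.Perm (Fin K), Measure.map (fun h => h ∘ π) ν0 = ν0)
    (θ : Fin K → Fin V → ℝ) (π : Equiv.Perm (Fin K)) :
    sigmaMin (coefMatrix ν0 m (fun k => θ (π k))) = sigmaMin (coefMatrix ν0 m θ) := by
  rw [coefMatrix_perm hexch θ π]
  exact sigmaMin_reindex (coefMatrix ν0 m θ)
    (Equiv.sumCongr (Equiv.refl (Fin m → Fin V)) π)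
    (Equiv.prodCongr π (Equiv.refl (Fin V)))

end Aux

/-- **Proposition (consistency of the smallest singular value under plug-in estimates).**
If `d_W(θ, θ̂_n) → 0` in probability, then `σ_min(A(θ̂_n)) → σ_min(A(θ))` in probability. -/
theorem sigmaMin_consistent
    {V K m : ℕ} (hV : 2 ≤ V) (hK : 2 ≤ K) (hm : 1 ≤ m) {c0 : ℝ} (hc0 : 0 < c0)
    (ν0 : Measure (Fin K → ℝ)) (hprob : IsProbabilityMeasure ν0)
    (hsupp : ν0 (simplex K)ᶜ = 0)
    (hexch : ∀ π : Equiv.Perm (Fin K), Measure.map (fun h => h ∘ π) ν0 = ν0)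
    (θ : Fin K → Fin V → ℝ) (hθ : θ ∈ Theta c0 V K)
    {Ω : Type*} [MeasurableSpace Ω] (μ : Measure Ω) [IsProbabilityMeasure μ]
    (θhat : ℕ → Ω → (Fin K → Fin V → ℝ))
    (hparam : ∀ n ω, IsParam (θhat n ω))
    (hconv : ∀ ε > (0 : ℝ),
      Tendsto (fun n => μ {ω | ε ≤ dW θ (θhat n ω)}) atTop (nhds 0)) :
    ∀ ε > (0 : ℝ),
      Tendsto (fun n => μ {ω |
          ε ≤ |sigmaMin (coefMatrix ν0 m (θhat n ω))
                - sigmaMin (coefMatrix ν0 m θ)|})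
        atTop (nhds 0) := by
  haveI : Nonempty (Fin K × Fin V) :=
    ⟨(⟨0, by omega⟩, ⟨0, by omega⟩)⟩
  intro ε hε
  set K0 : ℝ := (Fintype.card ((Fin m → Fin V) ⊕ Fin K) : ℝ)
    * (((Fintype.card (Fin K × Fin V) : ℝ) + 1)/2) with hK0
  have hK0nn : 0 ≤ K0 := by rw [hK0]; positivity
  set Cst : ℝ := K0 * (m * m) + 1 with hCst
  have hC0 : (0:ℝ) < Cst := by rw [hCst]; positivity
  have hδ : (0:ℝ) < ε / Cst := div_pos hε hC0
  have hsub : ∀ n, {ω | ε ≤ |sigmaMin (coefMatrix ν0 m (θhat n ω))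
        - sigmaMin (coefMatrix ν0 m θ)|}
      ⊆ {ω | ε / Cst ≤ dW θ (θhat n ω)} := by
    intro n ω hω
    simp only [Set.mem_setOf_eq] at hω ⊢
    by_contra hlt
    push_neg at hlt
    unfold dW at hlt
    obtain ⟨π, hπ⟩ : ∃ π : Equiv.Perm (Fin K),
        ∑ k, ∑ ℓ, |θ k ℓ - θhat n ω (π k) ℓ| < ε / Cst := by
      by_contra hc
      push_neg at hc
      exact absurd (le_ciInf hc) (not_le.2 hlt)
    set θ' : Fin K → Fin V → ℝ := fun k => θhat n ω (π k) with hθ'def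
    have hparam' : IsParam θ' :=
      ⟨fun k l => (hparam n ω).1 (π k) l, fun k => (hparam n ω).2 (π k)⟩
    have hθP : IsParam θ := ⟨fun k l => le_trans hc0.le (hθ.1 k l), hθ.2⟩
    have hD0 : (0:ℝ) ≤ ∑ k, ∑ ℓ, |θ k ℓ - θ' k ℓ| :=
      Finset.sum_nonneg fun _ _ => Finset.sum_nonneg fun _ _ => abs_nonneg _
    have hent : ∀ r c, |coefMatrix ν0 m θ r c - coefMatrix ν0 m θ' r c|
        ≤ (m * m) * ∑ k, ∑ ℓ, |θ k ℓ - θ' k ℓ| :=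
      fun r c => coef_entry_lip hsupp hθP hparam' r c
    have hlip := sigmaMin_sub_le (coefMatrix ν0 m θ) (coefMatrix ν0 m θ')
      (by positivity) hent
    rw [← hK0] at hlip
    have hperm : sigmaMin (coefMatrix ν0 m θ') = sigmaMin (coefMatrix ν0 m (θhat n ω)) :=
      sigmaMin_coef_perm hexch (θhat n ω) π
    have hDlt : ∑ k, ∑ ℓ, |θ k ℓ - θ' k ℓ| < ε / Cst := hπ
    have hstep : |sigmaMin (coefMatrix ν0 m θ) - sigmaMin (coefMatrix ν0 m θ')| < ε := by
      have e1 : K0 * ((m * m) * ∑ k, ∑ ℓ, |θ k ℓ - θ' k ℓ|)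
          ≤ Cst * ∑ k, ∑ ℓ, |θ k ℓ - θ' k ℓ| := by
        have : K0 * (m * m) ≤ Cst := by rw [hCst]; linarith
        nlinarith
      have e2 : Cst * ∑ k, ∑ ℓ, |θ k ℓ - θ' k ℓ| < ε := by
        have h3 := mul_lt_mul_of_pos_left hDlt hC0
        rwa [mul_comm Cst (ε / Cst), div_mul_cancel₀ ε (ne_of_gt hC0)] at h3
      linarith
    rw [hperm, abs_sub_comm] at hstep
    exact absurd hω (not_le.2 hstep)
  refine tendsto_of_tendsto_of_tendsto_of_le_of_le
    (tendsto_const_nhds : Tendsto (fun _ : ℕ => (0 : ENNReal)) atTop (nhds 0))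
    (hconv (ε / Cst) hδ) (fun n => zero_le) (fun n => measure_mono (hsub n))


end TopicModel
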